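/- If T is a strong Frobenius monad on a monoidal dagger category C, then the object T(I), equipped with multiplication μ_I ∘ T(ρ_{T(I)}) ∘ st_{T(I),I} : T(I) ⊗ T(I) → T(I) and unit η_I : I → T(I), is a Frobenius monoid in C; that is, the functor T ↦ T(I) preserves the Frobenius law. -/

import Mathlib

open CategoryTheory Category MonoidalCategory

universe v u

/-- A dagger structure on a category: a contravariant, identity-on-objects,
involutive operation on morphisms. -/
class DaggerStruct (C : Type u) [Category.{v} C] where
  dag : ∀ {X Y : C}, (X ⟶ Y) → (Y ⟶ X)
  dag_dag : ∀ {X Y : C} (f : X ⟶ Y), dag (dag f) = f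
  dag_id : ∀ X : C, dag (𝟙 X) = 𝟙 X
  dag_comp : ∀ {X Y Z : C} (f : X ⟶ Y) (g : Y ⟶ Z), dag (f ≫ g) = dag g ≫ dag f

notation:max f "†" => DaggerStruct.dag f

/-- A monoidal dagger category: the dagger cooperates with the monoidal structure. -/
class MonoidalDagger (C : Type u) [Category.{v} C] [MonoidalCategory C] extends
    DaggerStruct C where
  dag_tensor : ∀ {X₁ Y₁ X₂ Y₂ : C} (f : X₁ ⟶ Y₁) (g : X₂ ⟶ Y₂), (f ⊗ₘ g)† = f† ⊗ₘ g†
  assoc_unitary : ∀ X Y Z : C, ((α_ X Y Z).hom)† = (α_ X Y Z).inv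
  lunitor_unitary : ∀ X : C, ((λ_ X).hom)† = (λ_ X).inv
  runitor_unitary : ∀ X : C, ((ρ_ X).hom)† = (ρ_ X).inv

/-- A symmetric monoidal dagger category: additionally the symmetries are unitary. -/
class SymmetricDagger (C : Type u) [Category.{v} C] [MonoidalCategory C]
    [SymmetricCategory C] extends MonoidalDagger C where
  braiding_unitary : ∀ X Y : C, ((β_ X Y).hom)† = (β_ X Y).inv

/-- A monoid object, given by explicit data. -/
structure IsMonoidObj {C : Type u} [Category.{v} C] [MonoidalCategory C] (A : C)
    (m : A ⊗ A ⟶ A) (u : 𝟙_ C ⟶ A) : Prop where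
  mul_assoc : (m ⊗ₘ 𝟙 A) ≫ m = (α_ A A A).hom ≫ (𝟙 A ⊗ₘ m) ≫ m
  one_mul : (u ⊗ₘ 𝟙 A) ≫ m = (λ_ A).hom
  mul_one : (𝟙 A ⊗ₘ u) ≫ m = (ρ_ A).hom

/-- A Frobenius monoid in a monoidal dagger category. -/
structure IsFrobeniusMonoid {C : Type u} [Category.{v} C] [MonoidalCategory C]
    [MonoidalDagger C] (A : C) (m : A ⊗ A ⟶ A) (u : 𝟙_ C ⟶ A) extends
    IsMonoidObj A m u : Prop where
  frobenius : (m† ⊗ₘ 𝟙 A) ≫ (α_ A A A).hom ≫ (𝟙 A ⊗ₘ m) =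
    (𝟙 A ⊗ₘ m†) ≫ (α_ A A A).inv ≫ (m ⊗ₘ 𝟙 A)

/-- A Frobenius monad on a dagger category. -/
structure IsFrobeniusMonad {C : Type u} [Category.{v} C] [DaggerStruct C]
    (T : Monad C) : Prop where
  map_dag : ∀ {X Y : C} (f : X ⟶ Y), T.map (f†) = (T.map f)†
  frobenius : ∀ A : C,
    ((T.μ.app (T.obj A))†) ≫ T.map (T.μ.app A) =
      T.map ((T.μ.app A)†) ≫ T.μ.app (T.obj A)

/-- A strong Frobenius monad on a monoidal dagger category: a Frobenius monad `T` that is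
simultaneously a strong monad, with every strength map `st_{X,Y}` unitary. -/
structure IsStrongFrobeniusMonad {C : Type u} [Category.{v} C] [MonoidalCategory C]
    [MonoidalDagger C] (T : Monad C)
    (st : ∀ X Y : C, X ⊗ T.obj Y ⟶ T.obj (X ⊗ Y)) : Prop where
  map_dag : ∀ {X Y : C} (f : X ⟶ Y), T.map (f†) = (T.map f)†
  frobenius : ∀ A : C,
    ((T.μ.app (T.obj A))†) ≫ T.map (T.μ.app A) =
      T.map ((T.μ.app A)†) ≫ T.μ.app (T.obj A)
  st_natural : ∀ {X X' Y Y' : C} (f : X ⟶ X') (g : Y ⟶ Y'),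
    (f ⊗ₘ T.map g) ≫ st X' Y' = st X Y ≫ T.map (f ⊗ₘ g)
  st_assoc : ∀ X Y Z : C,
    (α_ X Y (T.obj Z)).inv ≫ st (X ⊗ Y) Z =
      (𝟙 X ⊗ₘ st Y Z) ≫ st X (Y ⊗ Z) ≫ T.map (α_ X Y Z).inv
  st_lunit : ∀ A : C, st (𝟙_ C) A ≫ T.map (λ_ A).hom = (λ_ (T.obj A)).hom
  st_mu : ∀ X A : C,
    (𝟙 X ⊗ₘ T.μ.app A) ≫ st X A =
      st X (T.obj A) ≫ T.map (st X A) ≫ T.μ.app (X ⊗ A)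
  st_eta : ∀ X A : C, (𝟙 X ⊗ₘ T.η.app A) ≫ st X A = T.η.app (X ⊗ A)
  st_unitary₁ : ∀ X Y : C, st X Y ≫ ((st X Y)†) = 𝟙 (X ⊗ T.obj Y)
  st_unitary₂ : ∀ X Y : C, ((st X Y)†) ≫ st X Y = 𝟙 (T.obj (X ⊗ Y))

/-- The multiplication `μ_I ∘ T(ρ_{T(I)}) ∘ st_{T(I),I}` on `T(I)` for a strong monad. -/
def tMul {C : Type u} [Category.{v} C] [MonoidalCategory C] (T : Monad C)
    (st : ∀ X Y : C, X ⊗ T.obj Y ⟶ T.obj (X ⊗ Y)) :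
    T.obj (𝟙_ C) ⊗ T.obj (𝟙_ C) ⟶ T.obj (𝟙_ C) :=
  st (T.obj (𝟙_ C)) (𝟙_ C) ≫ T.map (ρ_ (T.obj (𝟙_ C))).hom ≫ T.μ.app (𝟙_ C)

section AuxFrob

variable {C : Type u} [Category.{v} C] [MonoidalCategory C]

/-- Auxiliary unitary `T(ρ) ∘ st : T(I) ⊗ T(I) ⟶ T²(I)`. -/
def mAux (T : Monad C) (st : ∀ X Y : C, X ⊗ T.obj Y ⟶ T.obj (X ⊗ Y)) :
    T.obj (𝟙_ C) ⊗ T.obj (𝟙_ C) ⟶ T.obj (T.obj (𝟙_ C)) :=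
  st (T.obj (𝟙_ C)) (𝟙_ C) ≫ T.map (ρ_ (T.obj (𝟙_ C))).hom

/-- Auxiliary unitary `(T(I) ⊗ T(I)) ⊗ T(I) ⟶ T³(I)`. -/
def uAux (T : Monad C) (st : ∀ X Y : C, X ⊗ T.obj Y ⟶ T.obj (X ⊗ Y)) :
    (T.obj (𝟙_ C) ⊗ T.obj (𝟙_ C)) ⊗ T.obj (𝟙_ C) ⟶ T.obj (T.obj (T.obj (𝟙_ C))) :=
  st (T.obj (𝟙_ C) ⊗ T.obj (𝟙_ C)) (𝟙_ C) ≫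
    T.map (ρ_ (T.obj (𝟙_ C) ⊗ T.obj (𝟙_ C))).hom ≫ T.map (mAux T st)

theorem tMul_eq (T : Monad C) (st : ∀ X Y : C, X ⊗ T.obj Y ⟶ T.obj (X ⊗ Y)) :
    tMul T st = mAux T st ≫ T.μ.app (𝟙_ C) := by
  simp [tMul, mAux]

variable [MonoidalDagger C]

theorem L1aux (T : Monad C) (st : ∀ X Y : C, X ⊗ T.obj Y ⟶ T.obj (X ⊗ Y))
    (hT : IsStrongFrobeniusMonad T st) :
    (tMul T st ⊗ₘ 𝟙 (T.obj (𝟙_ C))) ≫ mAux T st =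
      uAux T st ≫ T.map (T.μ.app (𝟙_ C)) := by
  have h := hT.st_natural (tMul T st) (𝟙 (𝟙_ C))
  rw [T.toFunctor.map_id] at h
  rw [mAux, ← Category.assoc, h, Category.assoc, ← T.toFunctor.map_comp, tensorHom_id,
    rightUnitor_naturality, T.toFunctor.map_comp, tMul_eq, T.toFunctor.map_comp, uAux]
  simp [mAux]

theorem L2aux (T : Monad C) (st : ∀ X Y : C, X ⊗ T.obj Y ⟶ T.obj (X ⊗ Y))
    (hT : IsStrongFrobeniusMonad T st) :
    (α_ (T.obj (𝟙_ C)) (T.obj (𝟙_ C)) (T.obj (𝟙_ C))).hom ≫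
        (𝟙 (T.obj (𝟙_ C)) ⊗ₘ tMul T st) ≫ mAux T st =
      uAux T st ≫ T.μ.app (T.obj (𝟙_ C)) := by
  have h2 := hT.st_mu (T.obj (𝟙_ C)) (𝟙_ C)
  have h3 := hT.st_natural (𝟙 (T.obj (𝟙_ C))) (ρ_ (T.obj (𝟙_ C))).hom
  have h4 := hT.st_assoc (T.obj (𝟙_ C)) (T.obj (𝟙_ C)) (𝟙_ C)
  have h4' : (α_ (T.obj (𝟙_ C)) (T.obj (𝟙_ C)) (T.obj (𝟙_ C))).hom ≫
      (𝟙 (T.obj (𝟙_ C)) ⊗ₘ st (T.obj (𝟙_ C)) (𝟙_ C)) ≫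
        st (T.obj (𝟙_ C)) (T.obj (𝟙_ C) ⊗ 𝟙_ C) =
      st (T.obj (𝟙_ C) ⊗ T.obj (𝟙_ C)) (𝟙_ C) ≫
        T.map (α_ (T.obj (𝟙_ C)) (T.obj (𝟙_ C)) (𝟙_ C)).hom := by
    rw [← cancel_mono (T.map (α_ (T.obj (𝟙_ C)) (T.obj (𝟙_ C)) (𝟙_ C)).inv)]
    simp only [Category.assoc, ← h4, ← T.toFunctor.map_comp, Iso.hom_inv_id,
      T.toFunctor.map_id, Category.comp_id, Iso.hom_inv_id_assoc]
  have h5 : T.μ.app (T.obj (𝟙_ C) ⊗ 𝟙_ C) ≫ T.map (ρ_ (T.obj (𝟙_ C))).hom =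
      T.map (T.map (ρ_ (T.obj (𝟙_ C))).hom) ≫ T.μ.app (T.obj (𝟙_ C)) := by
    simpa using (T.μ.naturality (ρ_ (T.obj (𝟙_ C))).hom).symm
  have coh : (α_ (T.obj (𝟙_ C)) (T.obj (𝟙_ C)) (𝟙_ C)).hom ≫
      (𝟙 (T.obj (𝟙_ C)) ⊗ₘ (ρ_ (T.obj (𝟙_ C))).hom) =
      (ρ_ (T.obj (𝟙_ C) ⊗ T.obj (𝟙_ C))).hom := by
    rw [id_tensorHom]
    exact (rightUnitor_tensor_hom _ _).symm
  rw [tMul, mAux]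
  simp only [id_tensor_comp, Category.assoc]
  slice_lhs 4 5 => rw [h2]
  slice_lhs 3 4 => rw [h3]
  slice_lhs 6 7 => rw [h5]
  slice_lhs 1 3 => rw [h4']
  slice_lhs 2 3 => rw [← T.toFunctor.map_comp, coh]
  slice_lhs 3 4 => rw [← T.toFunctor.map_comp]
  simp [uAux, mAux]

theorem mAux_u1 (T : Monad C) (st : ∀ X Y : C, X ⊗ T.obj Y ⟶ T.obj (X ⊗ Y))
    (hT : IsStrongFrobeniusMonad T st) :
    mAux T st ≫ ((mAux T st)†) = 𝟙 (T.obj (𝟙_ C) ⊗ T.obj (𝟙_ C)) := by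
  rw [mAux, DaggerStruct.dag_comp, ← hT.map_dag, MonoidalDagger.runitor_unitary]
  slice_lhs 2 3 => rw [← T.toFunctor.map_comp, Iso.hom_inv_id, T.toFunctor.map_id]
  simp [hT.st_unitary₁]

theorem mAux_u2 (T : Monad C) (st : ∀ X Y : C, X ⊗ T.obj Y ⟶ T.obj (X ⊗ Y))
    (hT : IsStrongFrobeniusMonad T st) :
    ((mAux T st)†) ≫ mAux T st = 𝟙 (T.obj (T.obj (𝟙_ C))) := by
  rw [mAux, DaggerStruct.dag_comp, ← hT.map_dag, MonoidalDagger.runitor_unitary]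
  slice_lhs 2 3 => rw [hT.st_unitary₂]
  simp [← T.toFunctor.map_comp]

theorem uAux_u2 (T : Monad C) (st : ∀ X Y : C, X ⊗ T.obj Y ⟶ T.obj (X ⊗ Y))
    (hT : IsStrongFrobeniusMonad T st) :
    ((uAux T st)†) ≫ uAux T st = 𝟙 (T.obj (T.obj (T.obj (𝟙_ C)))) := by
  rw [uAux, DaggerStruct.dag_comp, DaggerStruct.dag_comp, ← hT.map_dag, ← hT.map_dag,
    MonoidalDagger.runitor_unitary]
  slice_lhs 3 4 => rw [hT.st_unitary₂]
  simp only [Category.id_comp, Category.comp_id, Category.assoc,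
    ← T.toFunctor.map_comp, Iso.inv_hom_id_assoc]
  rw [mAux_u2 T st hT, T.toFunctor.map_id]

end AuxFrob

/-- STATEMENT 17: if `T` is a strong Frobenius monad on a monoidal dagger category `C`,
then `T(I)`, with multiplication `μ_I ∘ T(ρ) ∘ st` and unit `η_I`, is a Frobenius monoid:
the functor `T ↦ T(I)` preserves the Frobenius law. -/
theorem eval_unit_frobenius_monoid {C : Type u} [Category.{v} C] [MonoidalCategory C]
    [MonoidalDagger C] (T : Monad C) (st : ∀ X Y : C, X ⊗ T.obj Y ⟶ T.obj (X ⊗ Y))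
    (hT : IsStrongFrobeniusMonad T st) :
    IsFrobeniusMonoid (T.obj (𝟙_ C)) (tMul T st) (T.η.app (𝟙_ C)) := by
  have GA := congrArg (· ≫ T.μ.app (𝟙_ C)) (L1aux T st hT)
  have GB := congrArg (· ≫ T.μ.app (𝟙_ C)) (L2aux T st hT)
  simp only [Category.assoc] at GA GB
  rw [← tMul_eq] at GA GB
  have e1 : tMul T st ⊗ₘ 𝟙 (T.obj (𝟙_ C)) =
      uAux T st ≫ T.map (T.μ.app (𝟙_ C)) ≫ ((mAux T st)†) := by
    have h := congrArg (· ≫ ((mAux T st)†)) (L1aux T st hT)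
    simp only [Category.assoc] at h
    rw [mAux_u1 T st hT, Category.comp_id] at h
    exact h
  have e2 : (α_ (T.obj (𝟙_ C)) (T.obj (𝟙_ C)) (T.obj (𝟙_ C))).hom ≫
      (𝟙 (T.obj (𝟙_ C)) ⊗ₘ tMul T st) =
      uAux T st ≫ T.μ.app (T.obj (𝟙_ C)) ≫ ((mAux T st)†) := by
    have h := congrArg (· ≫ ((mAux T st)†)) (L2aux T st hT)
    simp only [Category.assoc] at h
    rw [mAux_u1 T st hT, Category.comp_id] at h
    exact h
  have e3 : ((tMul T st)†) ⊗ₘ 𝟙 (T.obj (𝟙_ C)) =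
      mAux T st ≫ T.map ((T.μ.app (𝟙_ C))†) ≫ ((uAux T st)†) := by
    have h := congrArg (fun f => f†) e1
    simp only [DaggerStruct.dag_comp, DaggerStruct.dag_dag, MonoidalDagger.dag_tensor,
      DaggerStruct.dag_id, ← hT.map_dag, Category.assoc] at h
    exact h
  have e4 : (𝟙 (T.obj (𝟙_ C)) ⊗ₘ ((tMul T st)†)) ≫
      (α_ (T.obj (𝟙_ C)) (T.obj (𝟙_ C)) (T.obj (𝟙_ C))).inv =
      mAux T st ≫ ((T.μ.app (T.obj (𝟙_ C)))†) ≫ ((uAux T st)†) := by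
    have h := congrArg (fun f => f†) e2
    simp only [DaggerStruct.dag_comp, DaggerStruct.dag_dag, MonoidalDagger.dag_tensor,
      DaggerStruct.dag_id, MonoidalDagger.assoc_unitary, Category.assoc] at h
    exact h
  refine ⟨⟨?_, ?_, ?_⟩, ?_⟩
  · -- associativity
    rw [GA, GB, T.assoc]
  · -- one_mul
    have h := hT.st_natural (T.η.app (𝟙_ C)) (𝟙 (𝟙_ C))
    rw [T.toFunctor.map_id] at h
    rw [tMul, ← Category.assoc, h, Category.assoc]
    slice_lhs 2 3 => rw [← T.toFunctor.map_comp, tensorHom_id, rightUnitor_naturality,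
      T.toFunctor.map_comp]
    slice_lhs 3 4 => rw [T.right_unit]
    simp only [Functor.id_obj, Category.comp_id]
    rw [← unitors_equal]
    exact hT.st_lunit (𝟙_ C)
  · -- mul_one
    rw [tMul, ← Category.assoc, hT.st_eta, ← Category.assoc,
      ← T.η.naturality (ρ_ (T.obj (𝟙_ C))).hom]
    simp [T.left_unit]
  · -- frobenius
    have left : (((tMul T st)†) ⊗ₘ 𝟙 (T.obj (𝟙_ C))) ≫
        (α_ (T.obj (𝟙_ C)) (T.obj (𝟙_ C)) (T.obj (𝟙_ C))).hom ≫
        (𝟙 (T.obj (𝟙_ C)) ⊗ₘ tMul T st) =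
        mAux T st ≫ T.map ((T.μ.app (𝟙_ C))†) ≫ T.μ.app (T.obj (𝟙_ C)) ≫
          ((mAux T st)†) := by
      rw [e3, e2]
      slice_lhs 3 4 => rw [uAux_u2 T st hT]
      simp
    have right : (𝟙 (T.obj (𝟙_ C)) ⊗ₘ ((tMul T st)†)) ≫
        (α_ (T.obj (𝟙_ C)) (T.obj (𝟙_ C)) (T.obj (𝟙_ C))).inv ≫
        (tMul T st ⊗ₘ 𝟙 (T.obj (𝟙_ C))) =
        mAux T st ≫ ((T.μ.app (T.obj (𝟙_ C)))†) ≫ T.map (T.μ.app (𝟙_ C)) ≫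
          ((mAux T st)†) := by
      rw [e1, ← Category.assoc, e4]
      slice_lhs 3 4 => rw [uAux_u2 T st hT]
      simp
    rw [left, right]
    slice_lhs 2 3 => rw [← hT.frobenius (𝟙_ C)]
    simp
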